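/- For every tree G, the total graph T(G) contains no induced cycle of length at least 4 (i.e., T(G) is chordal). -/

import Mathlib

/-- The total graph T(G): vertices are the vertices and edges of `G`, with adjacency given by
adjacency/incidence in `G`. -/
def totalGraph {V : Type*} (G : SimpleGraph V) : SimpleGraph (V ⊕ G.edgeSet) where
  Adj a b :=
    match a, b with
    | Sum.inl u, Sum.inl v => G.Adj u v
    | Sum.inl u, Sum.inr e => u ∈ (e : Sym2 V)
    | Sum.inr e, Sum.inl u => u ∈ (e : Sym2 V)
    | Sum.inr e, Sum.inr f => e ≠ f ∧ ∃ v, v ∈ (e : Sym2 V) ∧ v ∈ (f : Sym2 V)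
  symm := by
    constructor
    rintro (u | e) (v | f) h
    · exact h.symm
    · exact h
    · exact h
    · exact ⟨h.1.symm, h.2.imp fun v hv => ⟨hv.2, hv.1⟩⟩
  loopless := by
    constructor
    rintro (u | e) h
    · exact G.irrefl h
    · exact h.1 rfl

namespace TotalChordalAux

open Sum SimpleGraph
open Fin.NatCast Fin.CommRing

variable {V : Type*} {G : SimpleGraph V}

/-- The side of the cut obtained by removing, in the subdivision tree of `G`, the incidence
between the vertex `x` and the edge `s(x,y)`.  An element is on the `x`-side iff `side` holds. -/
def side (G : SimpleGraph V) (x y : V) : V ⊕ G.edgeSet → Prop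
  | inl u => (G \ SimpleGraph.fromEdgeSet {s(x, y)}).Reachable x u
  | inr h => (h : Sym2 V) ≠ s(x, y) ∧
      ∃ w ∈ (h : Sym2 V), (G \ SimpleGraph.fromEdgeSet {s(x, y)}).Reachable x w

lemma side_inl {x y u : V} :
    side G x y (inl u) ↔ (G \ SimpleGraph.fromEdgeSet {s(x, y)}).Reachable x u := Iff.rfl

lemma side_inr {x y : V} {h : G.edgeSet} :
    side G x y (inr h) ↔ (h : Sym2 V) ≠ s(x, y) ∧
      ∃ w ∈ (h : Sym2 V), (G \ SimpleGraph.fromEdgeSet {s(x, y)}).Reachable x w := Iff.rfl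

lemma not_reach_y (hacyc : G.IsAcyclic) {x y : V} (hxy : G.Adj x y) :
    ¬ (G \ SimpleGraph.fromEdgeSet {s(x, y)}).Reachable x y :=
  ((isAcyclic_iff_forall_adj_isBridge.mp hacyc) hxy)

lemma side_inl_x {x y : V} : side G x y (inl x) := SimpleGraph.Reachable.refl x

lemma side_inl_y (hacyc : G.IsAcyclic) {x y : V} (hxy : G.Adj x y) :
    ¬ side G x y (inl y) := not_reach_y hacyc hxy

/-- Key incidence lemma: for any incidence `(u, h)` other than the cut incidence `(x, s(x,y))`,
both endpoints are on the same side. -/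
lemma side_incidence (hacyc : G.IsAcyclic) {x y : V} (hxy : G.Adj x y)
    (u : V) (h : G.edgeSet) (hu : u ∈ (h : Sym2 V))
    (hexc : ¬(u = x ∧ (h : Sym2 V) = s(x, y))) :
    (side G x y (inl u) ↔ side G x y (inr h)) := by
  obtain ⟨v, hv⟩ := Sym2.mem_iff_exists.mp hu
  have hadj : G.Adj u v := by
    have := h.2
    rw [hv] at this
    exact this
  by_cases heq : (h : Sym2 V) = s(x, y)
  · -- then the incidence must be (y, s(x,y))
    have heq' := hv ▸ heq
    rcases Sym2.eq_iff.mp heq' with ⟨hux, hvy⟩ | ⟨huy, hvx⟩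
    · exact absurd ⟨hux, heq⟩ hexc
    · subst huy
      constructor
      · intro hr
        exact absurd hr (not_reach_y hacyc hxy)
      · intro hs
        exact absurd heq hs.1
  · -- the edge h survives the deletion
    have hadj' : (G \ SimpleGraph.fromEdgeSet {s(x, y)}).Adj u v := by
      rw [sdiff_adj, fromEdgeSet_adj]
      refine ⟨hadj, ?_⟩
      rintro ⟨hmem, -⟩
      rw [Set.mem_singleton_iff] at hmem
      rw [hv] at heq
      exact heq hmem
    constructor
    · intro hr
      exact ⟨heq, u, hu, hr⟩
    · rintro ⟨-, w, hw, hrw⟩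
      rw [hv] at hw
      rcases Sym2.mem_iff.mp hw with rfl | rfl
      · exact hrw
      · exact hrw.trans hadj'.symm.reachable

/-- The `x`-side elements relevant in crossings: `inl x` or an edge through `x`. -/
def NSet (G : SimpleGraph V) (x : V) (a : V ⊕ G.edgeSet) : Prop :=
  a = inl x ∨ ∃ h : G.edgeSet, a = inr h ∧ x ∈ (h : Sym2 V)

lemma NSet_adj {x : V} {a b : V ⊕ G.edgeSet} (ha : NSet G x a) (hb : NSet G x b)
    (hab : a ≠ b) : (totalGraph G).Adj a b := by
  rcases ha with rfl | ⟨h, rfl, hxh⟩ <;> rcases hb with rfl | ⟨g, rfl, hxg⟩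
  · exact absurd rfl hab
  · exact hxg
  · exact hxh
  · refine ⟨?_, x, hxh, hxg⟩
    rintro rfl
    exact hab rfl

lemma NSet_inl_x {x : V} : NSet G x (inl x) := Or.inl rfl

/-- Classification of crossing pairs: if `a` and `b` are adjacent in the total graph and lie on
opposite sides of the cut, then either the pair is `(inl x, inl y)` or `b` is the cut edge
and `a` is in the `N`-set. -/
lemma crossing (hacyc : G.IsAcyclic) {x y : V} (hxy : G.Adj x y)
    {a b : V ⊕ G.edgeSet} (hadj : (totalGraph G).Adj a b)
    (ha : side G x y a) (hb : ¬ side G x y b) :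
    (a = inl x ∧ b = inl y) ∨ (b = inr ⟨s(x, y), G.mem_edgeSet.mpr hxy⟩ ∧ NSet G x a) := by
  rcases a with u | h <;> rcases b with v | g
  · -- vertex-vertex
    have huv : G.Adj u v := hadj
    set e : G.edgeSet := ⟨s(u, v), G.mem_edgeSet.mpr huv⟩ with he
    have hue : u ∈ (e : Sym2 V) := by simp [he]
    have hve : v ∈ (e : Sym2 V) := by simp [he]
    by_cases hex1 : u = x ∧ (e : Sym2 V) = s(x, y)
    · obtain ⟨rfl, he2⟩ := hex1
      have hvy : v = y := by
        simp only [he] at he2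
        exact Sym2.congr_right.mp he2
      exact Or.inl ⟨rfl, by rw [hvy]⟩
    · by_cases hex2 : v = x ∧ (e : Sym2 V) = s(x, y)
      · obtain ⟨rfl, he2⟩ := hex2
        simp only [he] at he2
        have huy : u = y := by
          rcases Sym2.eq_iff.mp he2 with ⟨h1, h2⟩ | ⟨h1, h2⟩
          · exact absurd h2 hxy.ne
          · exact h1
        subst huy
        exact absurd ha (side_inl_y hacyc hxy)
      · have i1 := side_incidence hacyc hxy u e hue hex1
        have i2 := side_incidence hacyc hxy v e hve hex2
        exact absurd (i2.mpr (i1.mp ha)) hb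
  · -- vertex-edge
    have hug : u ∈ (g : Sym2 V) := hadj
    by_cases hex : u = x ∧ (g : Sym2 V) = s(x, y)
    · obtain ⟨rfl, hg2⟩ := hex
      exact Or.inr ⟨congrArg inr (Subtype.ext hg2), NSet_inl_x⟩
    · exact absurd ((side_incidence hacyc hxy u g hug hex).mp ha) hb
  · -- edge-vertex
    have hvh : v ∈ (h : Sym2 V) := hadj
    by_cases hex : v = x ∧ (h : Sym2 V) = s(x, y)
    · obtain ⟨rfl, hh2⟩ := hex
      exact absurd side_inl_x hb
    · exact absurd ((side_incidence hacyc hxy v h hvh hex).mpr ha) hb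
  · -- edge-edge
    obtain ⟨hne, w, hwh, hwg⟩ := hadj
    by_cases hex1 : w = x ∧ (h : Sym2 V) = s(x, y)
    · exact absurd hex1.2 ha.1
    · by_cases hex2 : w = x ∧ (g : Sym2 V) = s(x, y)
      · obtain ⟨rfl, hg2⟩ := hex2
        exact Or.inr ⟨congrArg inr (Subtype.ext hg2), Or.inr ⟨h, rfl, hwh⟩⟩
      · have i1 := side_incidence hacyc hxy w h hwh hex1
        have i2 := side_incidence hacyc hxy w g hwg hex2
        exact absurd (i2.mp (i1.mpr ha)) hb

lemma fin_lit_ne_zero {m k : ℕ} (hk : k ≠ 0) (hlt : k < m + 2) :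
    ((k : ℕ) : Fin (m + 2)) ≠ 0 := by
  intro h
  have hval := congrArg Fin.val h
  rw [Fin.val_natCast, Nat.mod_eq_of_lt hlt] at hval
  simp only [Fin.val_zero] at hval
  exact hk hval

/-- In a cycle of length ≥ 4, two distinct neighbours of a common vertex are non-adjacent. -/
lemma cycle_no_local {m : ℕ} (hm : 2 ≤ m) {p q r : Fin (m + 2)}
    (hpq : (cycleGraph (m + 2)).Adj p q) (hpr : (cycleGraph (m + 2)).Adj p r)
    (hqr : q ≠ r) : ¬ (cycleGraph (m + 2)).Adj q r := by
  rw [cycleGraph_adj] at hpq hpr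
  intro hadj
  rw [cycleGraph_adj] at hadj
  have hone : (1 : Fin (m + 2)) ≠ 2 := by
    intro hcontra
    refine fin_lit_ne_zero (m := m) (k := 1) (by omega) (by omega) ?_
    push_cast
    linear_combination -hcontra
  have h3ne : (3 : Fin (m + 2)) ≠ 0 := by
    intro hcontra
    refine fin_lit_ne_zero (m := m) (k := 3) (by omega) (by omega) ?_
    push_cast
    exact hcontra
  have hq : q = p - 1 ∨ q = p + 1 := by
    rcases hpq with h | h
    · left; linear_combination -h
    · right; linear_combination h
  have hr : r = p - 1 ∨ r = p + 1 := by
    rcases hpr with h | h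
    · left; linear_combination -h
    · right; linear_combination h
  have key : q - r = (2 : Fin (m + 2)) ∨ r - q = (2 : Fin (m + 2)) := by
    rcases hq with rfl | rfl <;> rcases hr with rfl | rfl
    · exact absurd rfl hqr
    · right; ring
    · left; ring
    · exact absurd rfl hqr
  rcases hadj with h | h <;> rcases key with hk | hk
  · exact hone (h.symm.trans hk)
  · refine h3ne ?_
    linear_combination -h - hk
  · refine h3ne ?_
    linear_combination -h - hk
  · exact hone (h.symm.trans hk)

lemma exists_second_crossing {m : ℕ} (s : Fin (m + 2) → Prop) (h01 : ¬ (s 0 ↔ s 1)) :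
    ∃ j : Fin (m + 2), j ≠ 0 ∧ ¬ (s j ↔ s (j + 1)) := by
  by_contra hcon
  push_neg at hcon
  have key : ∀ k : ℕ, k < m + 2 → (s 1 ↔ s ((1 + k : ℕ) : Fin (m + 2))) := by
    intro k
    induction k with
    | zero => intro _; norm_num
    | succ k ih =>
      intro hk
      have hne : ((1 + k : ℕ) : Fin (m + 2)) ≠ 0 :=
        fin_lit_ne_zero (by omega) (by omega)
      have hcast : ((1 + (k + 1) : ℕ) : Fin (m + 2)) = ((1 + k : ℕ) : Fin (m + 2)) + 1 := by
        push_cast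
        ring
      rw [hcast]
      exact (ih (by omega)).trans (hcon _ hne)
  have last := key (m + 1) (by omega)
  have hcast : ((1 + (m + 1) : ℕ) : Fin (m + 2)) = 0 := by
    have h' : 1 + (m + 1) = m + 2 := by omega
    rw [h']
    exact Fin.natCast_self _
  rw [hcast] at last
  exact h01 (iff_comm.mp last)

lemma main_contra (hacyc : G.IsAcyclic) {m : ℕ} (hm : 2 ≤ m)
    (f : cycleGraph (m + 2) ↪g totalGraph G) {x y : V} (hxy : G.Adj x y)
    (h01 : ¬ (side G x y (f 0) ↔ side G x y (f 1))) : False := by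
  classical
  have fadj : ∀ i j : Fin (m + 2), (cycleGraph (m + 2)).Adj i j →
      (totalGraph G).Adj (f i) (f j) := fun i j h => f.map_adj_iff.mpr h
  have fadj' : ∀ i j : Fin (m + 2), (totalGraph G).Adj (f i) (f j) →
      (cycleGraph (m + 2)).Adj i j := fun i j h => f.map_adj_iff.mp h
  have hadj_succ : ∀ i : Fin (m + 2), (cycleGraph (m + 2)).Adj i (i + 1) := by
    intro i
    rw [cycleGraph_adj]
    right
    ring
  have h20 : (1 : Fin (m + 2)) + 1 ≠ 0 := by
    intro hcontra
    refine fin_lit_ne_zero (m := m) (k := 2) (by omega) (by omega) ?_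
    push_cast
    linear_combination hcontra
  -- extraction of step data from a crossing step
  have SD : ∀ i : Fin (m + 2), ¬ (side G x y (f i) ↔ side G x y (f (i + 1))) →
      ∃ p q : Fin (m + 2), ((p = i ∧ q = i + 1) ∨ (p = i + 1 ∧ q = i)) ∧
        ((f p = inl y ∧ f q = inl x) ∨
         (f p = inr ⟨s(x, y), G.mem_edgeSet.mpr hxy⟩ ∧ NSet G x (f q))) := by
    intro i hX
    by_cases hi : side G x y (f i)
    · have hi1 : ¬ side G x y (f (i + 1)) := fun h => hX ⟨fun _ => h, fun _ => hi⟩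
      rcases crossing hacyc hxy (fadj _ _ (hadj_succ i)) hi hi1 with ⟨ha, hb⟩ | ⟨hb, hN⟩
      · exact ⟨i + 1, i, Or.inr ⟨rfl, rfl⟩, Or.inl ⟨hb, ha⟩⟩
      · exact ⟨i + 1, i, Or.inr ⟨rfl, rfl⟩, Or.inr ⟨hb, hN⟩⟩
    · have hi1 : side G x y (f (i + 1)) := by
        by_contra hi1
        exact hX ⟨fun h => absurd h hi, fun h => absurd h hi1⟩
      rcases crossing hacyc hxy (fadj _ _ (hadj_succ i)).symm hi1 hi with ⟨ha, hb⟩ | ⟨hb, hN⟩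
      · exact ⟨i, i + 1, Or.inl ⟨rfl, rfl⟩, Or.inl ⟨hb, ha⟩⟩
      · exact ⟨i, i + 1, Or.inl ⟨rfl, rfl⟩, Or.inr ⟨hb, hN⟩⟩
  have h01' : ¬ (side G x y (f 0) ↔ side G x y (f (0 + 1))) := by
    rwa [zero_add]
  obtain ⟨p, q, hpq, hc⟩ := SD 0 h01'
  obtain ⟨j, hj0, hXj⟩ := exists_second_crossing (fun i => side G x y (f i)) h01
  obtain ⟨p', q', hpq', hc'⟩ := SD j hXj
  rw [zero_add] at hpq
  -- the two steps are distinct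
  have hdiff : ¬ (p = p' ∧ q = q') := by
    rintro ⟨rfl, rfl⟩
    rcases hpq with ⟨h1, h2⟩ | ⟨h1, h2⟩ <;> rcases hpq' with ⟨h3, h4⟩ | ⟨h3, h4⟩
    · exact hj0 (h3.symm.trans h1)
    · have hj1 : j = 1 := h4.symm.trans h2
      have hz : j + 1 = 0 := h3.symm.trans h1
      rw [hj1] at hz
      exact h20 hz
    · have hj1 : j = 1 := h3.symm.trans h1
      have hz : j + 1 = 0 := h4.symm.trans h2
      rw [hj1] at hz
      exact h20 hz
    · exact hj0 (h4.symm.trans h2)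
  have hPadj : (cycleGraph (m + 2)).Adj p q := by
    rcases hpq with ⟨rfl, rfl⟩ | ⟨rfl, rfl⟩
    · have := hadj_succ 0
      rwa [zero_add] at this
    · have := (hadj_succ 0).symm
      rwa [zero_add] at this
  have hPadj' : (cycleGraph (m + 2)).Adj p' q' := by
    rcases hpq' with ⟨rfl, rfl⟩ | ⟨rfl, rfl⟩
    · exact hadj_succ _
    · exact (hadj_succ _).symm
  -- the mixed case, as a local claim applied twice
  have mixed : ∀ P Q P' Q' : Fin (m + 2), (cycleGraph (m + 2)).Adj P Q →
      (cycleGraph (m + 2)).Adj P' Q' → f P = inl y → f Q = inl x →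
      f P' = inr ⟨s(x, y), G.mem_edgeSet.mpr hxy⟩ → NSet G x (f Q') → False := by
    intro P Q P' Q' hA hA' hPy hQx hPe hNQ
    have hyeps : (totalGraph G).Adj (f P) (f P') := by
      rw [hPy, hPe]
      show y ∈ s(x, y)
      simp
    have hQP' : Q ≠ P' := by
      intro hEq
      rw [hEq, hPe] at hQx
      cases hQx
    have hnadj := cycle_no_local hm hA (fadj' _ _ hyeps) hQP'
    apply hnadj
    apply fadj'
    rw [hQx, hPe]
    show x ∈ s(x, y)
    simp
  rcases hc with ⟨hpy, hqx⟩ | ⟨hpe, hN⟩ <;> rcases hc' with ⟨hpy', hqx'⟩ | ⟨hpe', hN'⟩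
  · -- both steps of type (inl y, inl x)
    exact hdiff ⟨f.injective (hpy.trans hpy'.symm), f.injective (hqx.trans hqx'.symm)⟩
  · exact mixed p q p' q' hPadj hPadj' hpy hqx hpe' hN'
  · exact mixed p' q' p q hPadj' hPadj hpy' hqx' hpe hN
  · -- both steps through the cut edge
    have hpp' : p = p' := f.injective (hpe.trans hpe'.symm)
    have hqq' : q ≠ q' := fun h => hdiff ⟨hpp', h⟩
    have hfq : f q ≠ f q' := fun h => hqq' (f.injective h)
    have hadjqq : (cycleGraph (m + 2)).Adj q q' := fadj' _ _ (NSet_adj hN hN' hfq)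
    exact cycle_no_local hm hPadj (hpp' ▸ hPadj') hqq' hadjqq

end TotalChordalAux

open TotalChordalAux Sum Fin.CommRing in
/-- The total graph of a finite tree is chordal: it has no induced cycle of length ≥ 4. -/
theorem totalGraph_of_tree_chordal {V : Type*} [Fintype V] (G : SimpleGraph V)
    (hconn : G.Connected) (hacyc : G.IsAcyclic) :
    ∀ n : ℕ, 4 ≤ n → IsEmpty (SimpleGraph.cycleGraph n ↪g totalGraph G) := by
  intro n hn
  obtain ⟨m, hm, rfl⟩ : ∃ m, 2 ≤ m ∧ n = m + 2 := ⟨n - 2, by omega, by omega⟩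
  constructor
  intro f
  have hadj01 : (totalGraph G).Adj (f 0) (f 1) := by
    apply f.map_adj_iff.mpr
    rw [SimpleGraph.cycleGraph_adj]
    right
    ring
  rcases hf0 : f 0 with u | h <;> rcases hf1 : f 1 with v | g <;> rw [hf0, hf1] at hadj01
  · -- vertex, vertex
    have hxy : G.Adj u v := hadj01
    refine main_contra hacyc hm f hxy ?_
    rw [hf0, hf1]
    intro hiff
    exact side_inl_y hacyc hxy (hiff.mp side_inl_x)
  · -- vertex, edge
    have hug : u ∈ (g : Sym2 V) := hadj01
    obtain ⟨v, hgv⟩ := Sym2.mem_iff_exists.mp hug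
    have hxy : G.Adj u v := by
      have := g.2
      rw [hgv] at this
      exact this
    refine main_contra hacyc hm f hxy ?_
    rw [hf0, hf1]
    intro hiff
    exact (hiff.mp side_inl_x).1 hgv
  · -- edge, vertex
    have huh : v ∈ (h : Sym2 V) := hadj01
    obtain ⟨w, hhw⟩ := Sym2.mem_iff_exists.mp huh
    have hxy : G.Adj v w := by
      have := h.2
      rw [hhw] at this
      exact this
    refine main_contra hacyc hm f hxy ?_
    rw [hf0, hf1]
    intro hiff
    exact (hiff.mpr side_inl_x).1 hhw
  · -- edge, edge
    obtain ⟨hne, w, hwh, hwg⟩ := hadj01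
    obtain ⟨v, hhv⟩ := Sym2.mem_iff_exists.mp hwh
    have hxy : G.Adj w v := by
      have := h.2
      rw [hhv] at this
      exact this
    refine main_contra hacyc hm f hxy ?_
    rw [hf0, hf1]
    intro hiff
    refine (hiff.mpr ?_).1 hhv
    refine ⟨?_, w, hwg, SimpleGraph.Reachable.refl w⟩
    intro hgeq
    exact hne (Subtype.ext (hhv.trans hgeq.symm))
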